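/- arXiv:2503.21475 — 6 statements merged into one kernel-verified Lean document; each statement's English description precedes it below -/
import Mathlib

section
/- Let μ̄₀ ∈ ℝ, μ̄ ∈ ℝ, σ̄₀² > 0, σ̄² ≥ 0 with |μ̄| ≤ σ̄²/2. Let ρ : [t₀,t₁) → ℝ be continuously differentiable, non-decreasing, with sup ρ ≤ μ̄₀, and let α, β : [t₀,∞) → ℝ be continuous and bounded with −α(t)²/2 ≤ β(t) ≤ −α(t)²/4 for all t. Define f(t) = ((ρ(t) − μ̄₀) − μ̄ − ∫_{t₀}^t β(s) ds)/√(σ̄₀² + σ̄² + ∫_{t₀}^t α(s)² ds). Then f is non-decreasing on [t₀,t₁); if moreover one of the inequalities on β is uniformly strict, then f is strictly increasing. -/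
/-- analytic core of Lemma 4.3(i): the standardized argument
`f(t) = ((ρ(t) − μ̄₀) − μ̄ − ∫_{t₀}^t β)/√(σ̄₀² + σ̄² + ∫_{t₀}^t α²)` is non-decreasing on
`[t₀,t₁)`, and strictly increasing if one of the inequalities on `β` is uniformly strict. -/
theorem standardized_argument_monotone
    (t₀ t₁ : ℝ) (ht : t₀ < t₁)
    (μ₀ μ : ℝ) (σ₀sq σsq : ℝ) (hσ₀ : 0 < σ₀sq) (hσ : 0 ≤ σsq)
    (hμ : |μ| ≤ σsq / 2)
    (ρ ρ' : ℝ → ℝ)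
    (hρderiv : ∀ t ∈ Set.Ico t₀ t₁, HasDerivAt ρ (ρ' t) t)
    (hρ'cont : ContinuousOn ρ' (Set.Ico t₀ t₁))
    (hρmono : ∀ s ∈ Set.Ico t₀ t₁, ∀ t ∈ Set.Ico t₀ t₁, s ≤ t → ρ s ≤ ρ t)
    (hρsup : ∀ t ∈ Set.Ico t₀ t₁, ρ t ≤ μ₀)
    (α β : ℝ → ℝ) (hαcont : Continuous α) (hβcont : Continuous β)
    (hαbdd : ∃ C, ∀ t, |α t| ≤ C) (hβbdd : ∃ C, ∀ t, |β t| ≤ C)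
    (hβ : ∀ t ∈ Set.Ico t₀ t₁, -(α t) ^ 2 / 2 ≤ β t ∧ β t ≤ -(α t) ^ 2 / 4)
    (f : ℝ → ℝ)
    (hf : ∀ t, f t = ((ρ t - μ₀) - μ - ∫ s in t₀..t, β s)
      / Real.sqrt (σ₀sq + σsq + ∫ s in t₀..t, (α s) ^ 2)) :
    MonotoneOn f (Set.Ico t₀ t₁) ∧
    ((∃ ε > 0, (∀ t ∈ Set.Ico t₀ t₁, -(α t) ^ 2 / 2 + ε ≤ β t) ∨
        (∀ t ∈ Set.Ico t₀ t₁, β t ≤ -(α t) ^ 2 / 4 - ε)) →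
      StrictMonoOn f (Set.Ico t₀ t₁)) := by
  -- abbreviations
  obtain ⟨A, hAdef⟩ : ∃ A : ℝ → ℝ, A = fun u => ∫ s in t₀..u, (α s) ^ 2 := ⟨_, rfl⟩
  obtain ⟨Bf, hBdef⟩ : ∃ Bf : ℝ → ℝ, Bf = fun u => ∫ s in t₀..u, β s := ⟨_, rfl⟩
  obtain ⟨Dn, hDdef⟩ : ∃ Dn : ℝ → ℝ, Dn = fun u => σ₀sq + σsq + A u := ⟨_, rfl⟩
  obtain ⟨N, hNdef⟩ : ∃ N : ℝ → ℝ, N = fun u => ρ u - μ₀ - μ - Bf u := ⟨_, rfl⟩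
  obtain ⟨S, hSdef⟩ : ∃ S : ℝ → ℝ, S = fun u => Real.sqrt (Dn u) := ⟨_, rfl⟩
  obtain ⟨E, hEdef⟩ : ∃ E : ℝ → ℝ, E = fun u =>
    ((ρ' u - β u) * S u - N u * ((α u) ^ 2 / (2 * S u))) / (S u) ^ 2 := ⟨_, rfl⟩
  have hfF : f = fun u => N u / S u := funext fun u => by
    rw [hf u]; simp only [hNdef, hSdef, hDdef, hAdef, hBdef]
  have hα2cont : Continuous fun s => (α s) ^ 2 := hαcont.pow 2
  have hAderiv : ∀ u : ℝ, HasDerivAt A ((α u) ^ 2) u := fun u => by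
    rw [hAdef]; exact (hα2cont.integral_hasStrictDerivAt t₀ u).hasDerivAt
  have hBderiv : ∀ u : ℝ, HasDerivAt Bf (β u) u := fun u => by
    rw [hBdef]; exact (hβcont.integral_hasStrictDerivAt t₀ u).hasDerivAt
  have hA0 : ∀ u : ℝ, t₀ ≤ u → 0 ≤ A u := fun u hu => by
    rw [hAdef]; exact intervalIntegral.integral_nonneg hu fun s _ => sq_nonneg _
  have hDpos : ∀ u : ℝ, t₀ ≤ u → 0 < Dn u := fun u hu => by
    have := hA0 u hu; simp only [hDdef]; linarith
  have hSpos : ∀ u : ℝ, t₀ ≤ u → 0 < S u := fun u hu => by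
    rw [hSdef]; exact Real.sqrt_pos.2 (hDpos u hu)
  have hS2 : ∀ u : ℝ, t₀ ≤ u → (S u) ^ 2 = Dn u := fun u hu => by
    rw [hSdef]; exact Real.sq_sqrt (hDpos u hu).le
  have hDnderiv : ∀ u : ℝ, HasDerivAt Dn ((α u) ^ 2) u := fun u => by
    rw [hDdef]; exact (hAderiv u).const_add (σ₀sq + σsq)
  have hSderiv : ∀ u : ℝ, t₀ ≤ u → HasDerivAt S ((α u) ^ 2 / (2 * S u)) u := fun u hu => by
    have h := (hDnderiv u).sqrt (hDpos u hu).ne'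
    rw [hSdef]
    exact h
  -- derivative of f at points of Ico
  have hfderiv : ∀ u ∈ Set.Ico t₀ t₁, HasDerivAt (fun v => N v / S v) (E u) u := by
    intro u hu
    have hN : HasDerivAt N (ρ' u - β u) u := by
      have h1 : HasDerivAt (fun v => ρ v - μ₀ - μ) (ρ' u) u :=
        ((hρderiv u hu).sub_const μ₀).sub_const μ
      rw [hNdef]; exact h1.sub (hBderiv u)
    have h := hN.div (hSderiv u hu.1) (hSpos u hu.1).ne'
    rw [hEdef]
    exact h
  -- continuity of f on Ico
  have hfcont : ContinuousOn (fun v => N v / S v) (Set.Ico t₀ t₁) := by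
    apply ContinuousOn.div
    · intro u hu
      exact ContinuousAt.continuousWithinAt <| by
        have h1 : HasDerivAt N (ρ' u - β u) u := by
          have h2 : HasDerivAt (fun v => ρ v - μ₀ - μ) (ρ' u) u :=
            ((hρderiv u hu).sub_const μ₀).sub_const μ
          rw [hNdef]; exact h2.sub (hBderiv u)
        exact h1.continuousAt
    · intro u hu
      exact ((hSderiv u hu.1).continuousAt).continuousWithinAt
    · intro u hu
      exact (hSpos u hu.1).ne'
  -- nonnegativity of ρ' on the interior
  have hρ'nonneg : ∀ u ∈ Set.Ioo t₀ t₁, 0 ≤ ρ' u := by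
    intro u huI
    have hu : u ∈ Set.Ico t₀ t₁ := ⟨huI.1.le, huI.2⟩
    have hd := hρderiv u hu
    have hslope : Filter.Tendsto (slope ρ u) (nhdsWithin u (Set.Ioi u)) (nhds (ρ' u)) :=
      (hasDerivAt_iff_tendsto_slope.mp hd).mono_left
        (nhdsWithin_mono u fun y hy => (Set.mem_Ioi.mp hy).ne')
    refine ge_of_tendsto hslope ?_
    filter_upwards [Ioo_mem_nhdsGT_of_mem (Set.mem_Ico.mpr ⟨le_rfl, huI.2⟩)] with y hy
    have hy' : y ∈ Set.Ico t₀ t₁ := ⟨(huI.1.trans hy.1).le, hy.2⟩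
    have hmono := hρmono u hu y hy' hy.1.le
    rw [slope_def_field]
    exact div_nonneg (by linarith) (by linarith [hy.1])
  -- bound on N
  have hNle : ∀ u ∈ Set.Ioo t₀ t₁, N u ≤ σsq / 2 + A u / 2 := by
    intro u huI
    have hu : u ∈ Set.Ico t₀ t₁ := ⟨huI.1.le, huI.2⟩
    have hρle := hρsup u hu
    have hμle : -μ ≤ σsq / 2 := (neg_le_abs μ).trans hμ
    have hBlow : -(A u) / 2 ≤ Bf u := by
      have hint1 : IntervalIntegrable (fun s => -(α s) ^ 2 / 2) MeasureTheory.volume t₀ u :=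
        ((hα2cont.neg).div_const 2).intervalIntegrable t₀ u
      have hint2 : IntervalIntegrable β MeasureTheory.volume t₀ u :=
        hβcont.intervalIntegrable t₀ u
      have hmono : (∫ s in t₀..u, -(α s) ^ 2 / 2) ≤ ∫ s in t₀..u, β s := by
        refine intervalIntegral.integral_mono_on huI.1.le hint1 hint2 fun x hx => ?_
        exact (hβ x ⟨hx.1, lt_of_le_of_lt hx.2 huI.2⟩).1
      have heq : (∫ s in t₀..u, -(α s) ^ 2 / 2) = -(A u) / 2 := by
        rw [hAdef]
        simp only
        simp only [neg_div]
        rw [intervalIntegral.integral_neg]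
        congr 1
        exact intervalIntegral.integral_div 2 fun s => (α s) ^ 2
      rw [heq] at hmono
      rw [hBdef]
      exact hmono
    simp only [hNdef]
    linarith
  -- core: lower bound on K gives lower bound on E
  have hcore : ∀ u ∈ Set.Ioo t₀ t₁, ∀ c : ℝ,
      c ≤ (ρ' u - β u) * Dn u - N u * (α u) ^ 2 / 2 → c / (S u) ^ 3 ≤ E u := by
    intro u huI c hK
    have hs : 0 < S u := hSpos u huI.1.le
    have hs2 : (S u) ^ 2 = Dn u := hS2 u huI.1.le
    have hnum : c / S u ≤ (ρ' u - β u) * S u - N u * ((α u) ^ 2 / (2 * S u)) := by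
      rw [div_le_iff₀ hs]
      have h2 : ((ρ' u - β u) * S u - N u * ((α u) ^ 2 / (2 * S u))) * S u
          = (ρ' u - β u) * Dn u - N u * (α u) ^ 2 / 2 := by
        rw [← hs2]
        field_simp
      rw [h2]; exact hK
    have h3 : c / (S u) ^ 3 = (c / S u) / (S u) ^ 2 := by ring
    rw [h3, hEdef]
    simp only
    exact div_le_div_of_nonneg_right hnum (by positivity)
  -- basic K lower bound
  have hKfacts : ∀ u ∈ Set.Ioo t₀ t₁,
      ρ' u * Dn u + (α u) ^ 2 * σ₀sq / 4 ≤ (ρ' u - β u) * Dn u - N u * (α u) ^ 2 / 2 := by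
    intro u huI
    have hu : u ∈ Set.Ico t₀ t₁ := ⟨huI.1.le, huI.2⟩
    have hb2 : β u ≤ -(α u) ^ 2 / 4 := (hβ u hu).2
    have hn := hNle u huI
    have hA0' := hA0 u huI.1.le
    have ha2 : (0:ℝ) ≤ (α u) ^ 2 := sq_nonneg _
    have hd0 : 0 < Dn u := hDpos u huI.1.le
    have hDeq : Dn u = σ₀sq + σsq + A u := by rw [hDdef]
    nlinarith [mul_nonneg (by linarith : (0:ℝ) ≤ -β u - (α u) ^ 2 / 4) hd0.le,
      mul_nonneg (by linarith : (0:ℝ) ≤ σsq / 2 + A u / 2 - N u) ha2]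
  constructor
  · -- monotone part
    rw [hfF]
    refine monotoneOn_of_hasDerivWithinAt_nonneg (convex_Ico t₀ t₁) hfcont
      (f' := E) ?_ ?_
    · intro u hu
      rw [interior_Ico] at hu
      exact ((hfderiv u ⟨hu.1.le, hu.2⟩).hasDerivWithinAt)
    · intro u hu
      rw [interior_Ico] at hu
      have hK := hKfacts u hu
      have hr := hρ'nonneg u hu
      have hd0 := hDpos u hu.1.le
      have h0 : (0:ℝ) / (S u) ^ 3 ≤ E u := by
        refine hcore u hu 0 ?_
        have p1 : 0 ≤ ρ' u * Dn u := mul_nonneg hr hd0.le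
        have p2 : 0 ≤ (α u) ^ 2 * σ₀sq := mul_nonneg (sq_nonneg (α u)) hσ₀.le
        linarith
      simpa using h0
  · -- strict part
    rintro ⟨ε, hε, hcase⟩
    rw [hfF]
    refine strictMonoOn_of_hasDerivWithinAt_pos (convex_Ico t₀ t₁) hfcont
      (f' := E) ?_ ?_
    · intro u hu
      rw [interior_Ico] at hu
      exact ((hfderiv u ⟨hu.1.le, hu.2⟩).hasDerivWithinAt)
    · intro u hu
      rw [interior_Ico] at hu
      have huIco : u ∈ Set.Ico t₀ t₁ := ⟨hu.1.le, hu.2⟩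
      have hr := hρ'nonneg u hu
      have hd0 := hDpos u hu.1.le
      have hn := hNle u hu
      have hA0' := hA0 u hu.1.le
      have ha2 : (0:ℝ) ≤ (α u) ^ 2 := sq_nonneg _
      have hDeq : Dn u = σ₀sq + σsq + A u := by rw [hDdef]
      have hKε : ε * σ₀sq ≤ (ρ' u - β u) * Dn u - N u * (α u) ^ 2 / 2 := by
        rcases hcase with hL | hR
        · -- lower bound strict: α² ≥ 4ε
          have hb1 := hL u huIco
          have hb2 := (hβ u huIco).2
          have h4ε : 4 * ε ≤ (α u) ^ 2 := by linarith
          have hK := hKfacts u hu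
          nlinarith [mul_nonneg hr hd0.le,
            mul_nonneg (by linarith : (0:ℝ) ≤ (α u) ^ 2 - 4 * ε) hσ₀.le]
        · -- upper bound strict
          have hb2 := hR u huIco
          nlinarith [mul_nonneg hr hd0.le,
            mul_nonneg (by linarith : (0:ℝ) ≤ -β u - (α u) ^ 2 / 4 - ε) hd0.le,
            mul_nonneg (by linarith : (0:ℝ) ≤ σsq / 2 + A u / 2 - N u) ha2,
            mul_nonneg hε.le (by linarith : (0:ℝ) ≤ σsq + A u)]
      have hs := hSpos u hu.1.le
      have hpos : 0 < ε * σ₀sq / (S u) ^ 3 := by positivity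
      exact lt_of_lt_of_le hpos (hcore u hu _ hKε)
end

section
/- Let μ̄₀, μ̄ ∈ ℝ, σ̄₀² > 0, σ̄² ≥ 0 with |μ̄| ≤ σ̄²/2. Let ρ be C¹, non-increasing, with inf ρ ≥ μ̄₀, and α, β continuous bounded with α(t)²/4 ≤ β(t) ≤ α(t)²/2 for all t. Then f(t) = ((ρ(t) − μ̄₀) − μ̄ − ∫_{t₀}^t β ds)/√(σ̄₀² + σ̄² + ∫_{t₀}^t α² ds) is non-increasing on [t₀,t₁), and strictly decreasing if one of the inequalities on β is uniformly strict. -/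
open MeasureTheory intervalIntegral Set Filter Topology


/-- analytic core of Lemma 4.3(ii): the standardized argument
`f(t) = ((ρ(t) − μ̄₀) − μ̄ − ∫_{t₀}^t β)/√(σ̄₀² + σ̄² + ∫_{t₀}^t α²)` is non-increasing on
`[t₀,t₁)`, and strictly decreasing if one of the inequalities on `β` is uniformly strict. -/
theorem standardized_argument_antitone
    (t₀ t₁ : ℝ) (ht : t₀ < t₁)
    (μ₀ μ : ℝ) (σ₀sq σsq : ℝ) (hσ₀ : 0 < σ₀sq) (hσ : 0 ≤ σsq)
    (hμ : |μ| ≤ σsq / 2)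
    (ρ ρ' : ℝ → ℝ)
    (hρderiv : ∀ t ∈ Set.Ico t₀ t₁, HasDerivAt ρ (ρ' t) t)
    (hρ'cont : ContinuousOn ρ' (Set.Ico t₀ t₁))
    (hρmono : ∀ s ∈ Set.Ico t₀ t₁, ∀ t ∈ Set.Ico t₀ t₁, s ≤ t → ρ t ≤ ρ s)
    (hρinf : ∀ t ∈ Set.Ico t₀ t₁, μ₀ ≤ ρ t)
    (α β : ℝ → ℝ) (hαcont : Continuous α) (hβcont : Continuous β)
    (hαbdd : ∃ C, ∀ t, |α t| ≤ C) (hβbdd : ∃ C, ∀ t, |β t| ≤ C)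
    (hβ : ∀ t ∈ Set.Ico t₀ t₁, (α t) ^ 2 / 4 ≤ β t ∧ β t ≤ (α t) ^ 2 / 2)
    (f : ℝ → ℝ)
    (hf : ∀ t, f t = ((ρ t - μ₀) - μ - ∫ s in t₀..t, β s)
      / Real.sqrt (σ₀sq + σsq + ∫ s in t₀..t, (α s) ^ 2)) :
    AntitoneOn f (Set.Ico t₀ t₁) ∧
    ((∃ ε > 0, (∀ t ∈ Set.Ico t₀ t₁, (α t) ^ 2 / 4 + ε ≤ β t) ∨
        (∀ t ∈ Set.Ico t₀ t₁, β t ≤ (α t) ^ 2 / 2 - ε)) →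
      StrictAntiOn f (Set.Ico t₀ t₁)) := by
  obtain ⟨V, hVdef⟩ : ∃ g : ℝ → ℝ, g = fun t => σ₀sq + σsq + ∫ s in t₀..t, (α s) ^ 2 := ⟨_, rfl⟩
  obtain ⟨N, hNdef⟩ : ∃ g : ℝ → ℝ, g = fun t => (ρ t - μ₀) - μ - ∫ s in t₀..t, β s := ⟨_, rfl⟩
  have hα2cont : Continuous fun s => (α s) ^ 2 := hαcont.pow 2
  have hα2int : ∀ a b : ℝ, IntervalIntegrable (fun s => (α s) ^ 2) volume a b :=
    fun a b => hα2cont.intervalIntegrable a b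
  have hβint : ∀ a b : ℝ, IntervalIntegrable β volume a b :=
    fun a b => hβcont.intervalIntegrable a b
  -- derivative of V
  have hVderiv : ∀ t : ℝ, HasDerivAt V ((α t) ^ 2) t := by
    intro t
    rw [hVdef]
    exact (intervalIntegral.integral_hasDerivAt_right (hα2int t₀ t)
      (hα2cont.stronglyMeasurableAtFilter _ _) hα2cont.continuousAt).const_add _
  -- positivity of V
  have hVpos : ∀ t, t₀ ≤ t → 0 < V t := by
    intro t htt
    have h1 : 0 ≤ ∫ s in t₀..t, (α s) ^ 2 :=
      intervalIntegral.integral_nonneg htt (fun s _ => sq_nonneg _)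
    simp only [hVdef]
    positivity
  have hVlb : ∀ t, t₀ ≤ t → σ₀sq ≤ V t := by
    intro t htt
    have h1 : 0 ≤ ∫ s in t₀..t, (α s) ^ 2 :=
      intervalIntegral.integral_nonneg htt (fun s _ => sq_nonneg _)
    simp only [hVdef]; linarith
  have hsqrtpos : ∀ t, t₀ ≤ t → 0 < Real.sqrt (V t) :=
    fun t htt => Real.sqrt_pos.mpr (hVpos t htt)
  -- derivative of N
  have hNderiv : ∀ t ∈ Set.Ico t₀ t₁, HasDerivAt N (ρ' t - β t) t := by
    intro t htI
    rw [hNdef]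
    have hB : HasDerivAt (fun u => ∫ s in t₀..u, β s) (β t) t :=
      intervalIntegral.integral_hasDerivAt_right (hβint t₀ t)
        (hβcont.stronglyMeasurableAtFilter _ _) hβcont.continuousAt
    exact (((hρderiv t htI).sub_const μ₀).sub_const μ).sub hB
  -- f equals N / sqrt V
  have hfN : f = fun t => N t / Real.sqrt (V t) := by
    funext t
    simp only [hVdef, hNdef]
    exact hf t
  -- ρ' nonpositive
  have hρ'nonpos : ∀ t ∈ Set.Ico t₀ t₁, ρ' t ≤ 0 := by
    intro t htI
    have hd := (hρderiv t htI)
    rw [hasDerivAt_iff_tendsto_slope] at hd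
    have h2 : Tendsto (slope ρ t) (𝓝[>] t) (𝓝 (ρ' t)) :=
      hd.mono_left (nhdsWithin_mono t (fun y hy => ne_of_gt hy))
    refine le_of_tendsto h2 ?_
    filter_upwards [Ioo_mem_nhdsGT_of_mem ⟨le_refl t, htI.2⟩] with y hy
    rw [slope_def_field]
    have hy1 : ρ y ≤ ρ t := hρmono t htI y ⟨le_trans htI.1 hy.1.le, hy.2⟩ hy.1.le
    have hy2 : 0 < y - t := sub_pos.mpr hy.1
    exact div_nonpos_of_nonpos_of_nonneg (by linarith) hy2.le
  -- lower bound on N + V/2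
  have hNV : ∀ t ∈ Set.Ico t₀ t₁, σ₀sq / 2 ≤ N t + V t / 2 := by
    intro t htI
    have hBA : (∫ s in t₀..t, β s) ≤ ∫ s in t₀..t, (α s) ^ 2 / 2 := by
      apply intervalIntegral.integral_mono_on htI.1 (hβint t₀ t)
        ((hα2cont.div_const 2).intervalIntegrable t₀ t)
      intro s hs
      exact (hβ s ⟨hs.1, lt_of_le_of_lt hs.2 htI.2⟩).2
    have hint : (∫ s in t₀..t, (α s) ^ 2 / 2) = (∫ s in t₀..t, (α s) ^ 2) / 2 :=
      intervalIntegral.integral_div 2 _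
    have hμ' := (abs_le.mp hμ).2
    have hρt : μ₀ ≤ ρ t := hρinf t htI
    simp only [hNdef, hVdef]
    rw [hint] at hBA
    linarith
  -- the derivative of f
  have hfderiv : ∀ t ∈ Set.Ico t₀ t₁, HasDerivAt f
      ((((ρ' t - β t) * V t - N t * ((α t) ^ 2 / 2)) / Real.sqrt (V t))
        / (Real.sqrt (V t)) ^ 2) t := by
    intro t htI
    have hs : Real.sqrt (V t) ≠ 0 := (hsqrtpos t htI.1).ne'
    have hVne : V t ≠ 0 := (hVpos t htI.1).ne'
    have hg : HasDerivAt (fun u => Real.sqrt (V u)) ((α t) ^ 2 / (2 * Real.sqrt (V t))) t :=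
      (hVderiv t).sqrt hVne
    have hd : HasDerivAt f
        (((ρ' t - β t) * Real.sqrt (V t) - N t * ((α t) ^ 2 / (2 * Real.sqrt (V t))))
          / (Real.sqrt (V t)) ^ 2) t := by
      rw [hfN]; exact (hNderiv t htI).div hg hs
    have hsq : Real.sqrt (V t) * Real.sqrt (V t) = V t := Real.mul_self_sqrt (hVpos t htI.1).le
    have heq : (ρ' t - β t) * Real.sqrt (V t) - N t * ((α t) ^ 2 / (2 * Real.sqrt (V t)))
        = ((ρ' t - β t) * V t - N t * ((α t) ^ 2 / 2)) / Real.sqrt (V t) := by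
      rw [eq_div_iff hs]
      field_simp
      linear_combination (ρ' t - β t) * 2 * hsq
    rwa [heq] at hd
  -- key pointwise inequality (base case)
  have hkey : ∀ t ∈ Set.Ico t₀ t₁,
      (ρ' t - β t) * V t - N t * ((α t) ^ 2 / 2) ≤ 0 := by
    intro t htI
    have h1 := hρ'nonpos t htI
    have h2 := (hβ t htI).1
    have h3 := hNV t htI
    have h4 := hVpos t htI.1
    have ha : (0:ℝ) ≤ α t ^ 2 := sq_nonneg _
    have hrV : ρ' t * V t ≤ 0 := mul_nonpos_of_nonpos_of_nonneg h1 h4.le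
    have hbV : (α t ^ 2 / 4) * V t ≤ β t * V t := mul_le_mul_of_nonneg_right h2 h4.le
    have hNa : (α t ^ 2 / 2) * (σ₀sq / 2) ≤ (α t ^ 2 / 2) * (N t + V t / 2) :=
      mul_le_mul_of_nonneg_left h3 (by positivity)
    have haσ : (0:ℝ) ≤ (α t ^ 2 / 2) * (σ₀sq / 2) := by positivity
    linarith
  -- deriv formula and sign transfer
  have hderivle : ∀ t ∈ Set.Ico t₀ t₁, deriv f t ≤ 0 := by
    intro t htI
    rw [(hfderiv t htI).deriv]
    have hs := hsqrtpos t htI.1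
    exact div_nonpos_of_nonpos_of_nonneg
      (div_nonpos_of_nonpos_of_nonneg (hkey t htI) hs.le) (sq_nonneg _)
  have hcont : ContinuousOn f (Set.Ico t₀ t₁) :=
    fun t htI => ((hfderiv t htI).differentiableAt.continuousAt).continuousWithinAt
  have hdiff : DifferentiableOn ℝ f (interior (Set.Ico t₀ t₁)) := by
    rw [interior_Ico]
    exact fun t htI =>
      ((hfderiv t ⟨htI.1.le, htI.2⟩).differentiableAt).differentiableWithinAt
  constructor
  · apply antitoneOn_of_deriv_nonpos (convex_Ico t₀ t₁) hcont hdiff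
    intro x hx
    rw [interior_Ico] at hx
    exact hderivle x ⟨hx.1.le, hx.2⟩
  · rintro ⟨ε, hε, hcase⟩
    have hkeystrict : ∀ t ∈ Set.Ico t₀ t₁,
        (ρ' t - β t) * V t - N t * ((α t) ^ 2 / 2) < 0 := by
      intro t htI
      have h1 := hρ'nonpos t htI
      have h3 := hNV t htI
      have h4 := hVpos t htI.1
      have h5 := hVlb t htI.1
      have ha : (0:ℝ) ≤ α t ^ 2 := sq_nonneg _
      have hrV : ρ' t * V t ≤ 0 := mul_nonpos_of_nonpos_of_nonneg h1 h4.le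
      have hNa : (α t ^ 2 / 2) * (σ₀sq / 2) ≤ (α t ^ 2 / 2) * (N t + V t / 2) :=
        mul_le_mul_of_nonneg_left h3 (by positivity)
      rcases hcase with hA | hB
      · have h2 := hA t htI
        have hbV : (α t ^ 2 / 4 + ε) * V t ≤ β t * V t := mul_le_mul_of_nonneg_right h2 h4.le
        have hεV : ε * σ₀sq ≤ ε * V t := mul_le_mul_of_nonneg_left h5 hε.le
        have hεσ : (0:ℝ) < ε * σ₀sq := by positivity
        have haσ : (0:ℝ) ≤ (α t ^ 2 / 2) * (σ₀sq / 2) := by positivity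
        linarith
      · have h2 := (hβ t htI).1
        have h6 := hB t htI
        have h7 : 4 * ε ≤ (α t) ^ 2 := by linarith
        have hbV : (α t ^ 2 / 4) * V t ≤ β t * V t := mul_le_mul_of_nonneg_right h2 h4.le
        have haσ : 4 * ε * σ₀sq ≤ α t ^ 2 * σ₀sq := mul_le_mul_of_nonneg_right h7 hσ₀.le
        have hεσ : (0:ℝ) < ε * σ₀sq := by positivity
        linarith
    apply strictAntiOn_of_deriv_neg (convex_Ico t₀ t₁) hcont
    intro x hx
    rw [interior_Ico] at hx
    have htI : x ∈ Set.Ico t₀ t₁ := ⟨hx.1.le, hx.2⟩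
    rw [(hfderiv x htI).deriv]
    have hs := hsqrtpos x htI.1
    exact div_neg_of_neg_of_pos
      (div_neg_of_neg_of_pos (hkeystrict x htI) hs) (by positivity)
end

section
/- Let f : [t₀,t₁) → ℝ be a differentiable function whose derivative satisfies f'(t) = g(t)/(2(σ̄₀² + σ̄² + ∫_{t₀}^t α(s)² ds)^{3/2}) where g(t) = α(t)²(∫_{t₀}^t β(s) ds + μ̄ + (μ̄₀ − ρ(t))) + 2(ρ'(t) − β(t))(σ̄₀² + σ̄² + ∫_{t₀}^t α(s)² ds). If ρ' ≥ 0, ρ ≤ μ̄₀, β(t) ∈ [−α(t)²/2, −α(t)²/4], and |μ̄| ≤ σ̄²/2, then g(t) ≥ α(t)²(σ̄²/2 − |μ̄|) ≥ 0 for all t ∈ (t₀,t₁). -/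
/-- key inequality (eq_g1) in the proof of Lemma 4.3(i): under the sign
conditions on `ρ`, `β` and `μ̄`, the numerator `g` of `f'` satisfies
`g(t) ≥ α(t)²(σ̄²/2 − |μ̄|) ≥ 0` on `(t₀,t₁)`. -/
theorem numerator_nonneg
    (t₀ t₁ : ℝ) (ht : t₀ < t₁)
    (μ₀ μ : ℝ) (σ₀sq σsq : ℝ) (hσ₀ : 0 < σ₀sq) (hσ : 0 ≤ σsq)
    (hμ : |μ| ≤ σsq / 2)
    (ρ ρ' : ℝ → ℝ)
    (hρderiv : ∀ t ∈ Set.Ioo t₀ t₁, HasDerivAt ρ (ρ' t) t)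
    (hρ' : ∀ t ∈ Set.Ioo t₀ t₁, 0 ≤ ρ' t)
    (hρ : ∀ t ∈ Set.Ioo t₀ t₁, ρ t ≤ μ₀)
    (α β : ℝ → ℝ) (hαcont : Continuous α) (hβcont : Continuous β)
    (hβ : ∀ t, t₀ ≤ t → t < t₁ → -(α t) ^ 2 / 2 ≤ β t ∧ β t ≤ -(α t) ^ 2 / 4)
    (g : ℝ → ℝ)
    (hg : ∀ t, g t = (α t) ^ 2 * ((∫ s in t₀..t, β s) + μ + (μ₀ - ρ t))
      + 2 * (ρ' t - β t) * (σ₀sq + σsq + ∫ s in t₀..t, (α s) ^ 2)) :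
    ∀ t ∈ Set.Ioo t₀ t₁, (α t) ^ 2 * (σsq / 2 - |μ|) ≤ g t ∧
      0 ≤ (α t) ^ 2 * (σsq / 2 - |μ|) := by
  intro t htmem
  obtain ⟨ht₀, ht₁⟩ := htmem
  have hα2 : (0:ℝ) ≤ (α t) ^ 2 := sq_nonneg _
  have hμσ : (0:ℝ) ≤ σsq / 2 - |μ| := by linarith
  refine ⟨?_, mul_nonneg hα2 hμσ⟩
  rw [hg t]
  -- integral bounds
  have hint1 : IntervalIntegrable β MeasureTheory.volume t₀ t :=
    hβcont.intervalIntegrable _ _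
  have hint2 : IntervalIntegrable (fun s => -(α s) ^ 2 / 2) MeasureTheory.volume t₀ t :=
    ((hαcont.pow 2).neg.div_const 2).intervalIntegrable _ _
  have hIβ : (∫ s in t₀..t, -(α s) ^ 2 / 2) ≤ ∫ s in t₀..t, β s := by
    apply intervalIntegral.integral_mono_on ht₀.le hint2 hint1
    intro s hs
    exact (hβ s hs.1 (lt_of_le_of_lt hs.2 ht₁)).1
  have hIval : (∫ s in t₀..t, -(α s) ^ 2 / 2) = -(∫ s in t₀..t, (α s) ^ 2) / 2 := by
    simp [intervalIntegral.integral_neg, intervalIntegral.integral_div]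
  have hIα : (0:ℝ) ≤ ∫ s in t₀..t, (α s) ^ 2 :=
    intervalIntegral.integral_nonneg ht₀.le (fun s _ => sq_nonneg _)
  set I := ∫ s in t₀..t, (α s) ^ 2 with hI
  have hIβ' : -I / 2 ≤ ∫ s in t₀..t, β s := hIval ▸ hIβ
  have hβt : β t ≤ -(α t) ^ 2 / 4 := (hβ t ht₀.le ht₁).2
  have hρ't : 0 ≤ ρ' t := hρ' t ⟨ht₀, ht₁⟩
  have hρt : ρ t ≤ μ₀ := hρ t ⟨ht₀, ht₁⟩
  have h1 : (α t) ^ 2 * (-I / 2 + μ + 0) ≤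
      (α t) ^ 2 * ((∫ s in t₀..t, β s) + μ + (μ₀ - ρ t)) := by
    apply mul_le_mul_of_nonneg_left _ hα2
    have : (0:ℝ) ≤ μ₀ - ρ t := by linarith
    linarith
  have h2 : 2 * ((α t) ^ 2 / 4) * (σ₀sq + σsq + I) ≤
      2 * (ρ' t - β t) * (σ₀sq + σsq + I) := by
    apply mul_le_mul_of_nonneg_right _ (by linarith)
    linarith
  have hμabs : -|μ| ≤ μ := neg_abs_le μ
  nlinarith [mul_nonneg hα2 hσ₀.le, mul_nonneg hα2 hσ, mul_nonneg hα2 hIα]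
end

section
/- Let Φ be the standard normal CDF, C > 0, σ̄₀ > 0, and let 𝒜, 𝓑 : [0,∞) → ℝ be measurable with 𝒜(t)² ≤ C and −𝒜(t)²/2 ≤ 𝓑(t) ≤ −𝒜(t)²/4 for all t. Suppose ρ : [0,∞) → ℝ satisfies ρ(T) ≤ μ̄₀ and Φ((ρ(T) − μ̄₀ − ∫₀^T 𝓑(u)du)/√(σ̄₀² + ∫₀^T 𝒜(u)² du)) = y for some T > 0 and y ∈ (0,1). Then T ≥ (2σ̄₀/C)·Φ⁻¹(y). -/
open ProbabilityTheory MeasureTheory Set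

lemma gauss_cdf_strictMono : StrictMono (fun x => cdf (gaussianReal 0 1) x) := by
  intro a b hab
  simp only
  rw [cdf_eq_real, cdf_eq_real, measureReal_def, measureReal_def]
  have hμfin : (gaussianReal 0 1) (Iic b) ≠ ⊤ := measure_ne_top _ _
  have hsplit : (gaussianReal 0 1) (Iic b)
      = (gaussianReal 0 1) (Iic a) + (gaussianReal 0 1) (Ioc a b) := by
    rw [← Set.Iic_union_Ioc_eq_Iic hab.le,
      measure_union (Set.Iic_disjoint_Ioc le_rfl) measurableSet_Ioc]
  have hpos : 0 < (gaussianReal 0 1) (Ioc a b) := by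
    by_contra h
    push_neg at h
    have h0 : (gaussianReal 0 1) (Ioc a b) = 0 := le_antisymm h (zero_le)
    have := (gaussianReal_absolutelyContinuous' 0 (by norm_num)) h0
    rw [Real.volume_Ioc] at this
    simp only [ENNReal.ofReal_eq_zero, sub_nonpos] at this
    exact absurd this (not_le.2 hab)
  have hlt : (gaussianReal 0 1) (Iic a) < (gaussianReal 0 1) (Iic b) := by
    rw [hsplit]
    exact ENNReal.lt_add_right (fun h => hμfin (by rw [hsplit, h]; simp [h])) hpos.ne'
  exact ENNReal.toReal_lt_toReal (fun h => hμfin (by rw [hsplit, h]; simp)) hμfin |>.2 hlt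

/-- quantitative globality estimate from Theorem 4.2(c):
if `Φ((ρ(T) − μ̄₀ − ∫₀^T 𝓑)/√(σ̄₀² + ∫₀^T 𝒜²)) = y` with `𝒜² ≤ C` and
`−𝒜²/2 ≤ 𝓑 ≤ −𝒜²/4`, and `ρ(T) ≤ μ̄₀`, then `T ≥ (2σ̄₀/C)·Φ⁻¹(y)`. -/
theorem globality_level_time_bound
    (C σ₀ : ℝ) (hC : 0 < C) (hσ₀ : 0 < σ₀)
    (𝒜 𝓑 : ℝ → ℝ) (h𝒜m : Measurable 𝒜) (h𝓑m : Measurable 𝓑)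
    (h𝒜 : ∀ t, (𝒜 t) ^ 2 ≤ C)
    (h𝓑 : ∀ t, -(𝒜 t) ^ 2 / 2 ≤ 𝓑 t ∧ 𝓑 t ≤ -(𝒜 t) ^ 2 / 4)
    (μ₀ : ℝ) (ρ : ℝ → ℝ)
    (T : ℝ) (hT : 0 < T) (hρT : ρ T ≤ μ₀)
    (y : ℝ) (hy : y ∈ Set.Ioo (0 : ℝ) 1)
    (hhit : cdf (gaussianReal 0 1)
        ((ρ T - μ₀ - ∫ u in (0:ℝ)..T, 𝓑 u)
          / Real.sqrt (σ₀ ^ 2 + ∫ u in (0:ℝ)..T, (𝒜 u) ^ 2)) = y) :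
    T ≥ (2 * σ₀ / C) * Function.invFun (fun x => cdf (gaussianReal 0 1) x) y := by
  set x : ℝ := (ρ T - μ₀ - ∫ u in (0:ℝ)..T, 𝓑 u)
      / Real.sqrt (σ₀ ^ 2 + ∫ u in (0:ℝ)..T, (𝒜 u) ^ 2) with hx
  have hinj : Function.Injective (fun x => cdf (gaussianReal 0 1) x) :=
    gauss_cdf_strictMono.injective
  have hinv : Function.invFun (fun x => cdf (gaussianReal 0 1) x) y = x := by
    rw [← hhit]
    exact Function.leftInverse_invFun hinj x
  rw [hinv]
  -- integrability
  have hA2int : IntervalIntegrable (fun u => (𝒜 u) ^ 2) volume 0 T := by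
    rw [intervalIntegrable_iff_integrableOn_Ioc_of_le hT.le]
    refine Measure.integrableOn_of_bounded (M := C) (by simp) ((h𝒜m.pow_const 2).aestronglyMeasurable) ?_
    filter_upwards with t
    rw [Real.norm_eq_abs, abs_of_nonneg (sq_nonneg _)]
    exact h𝒜 t
  have hBint : IntervalIntegrable 𝓑 volume 0 T := by
    rw [intervalIntegrable_iff_integrableOn_Ioc_of_le hT.le]
    refine Measure.integrableOn_of_bounded (M := C / 2) (by simp) h𝓑m.aestronglyMeasurable ?_
    filter_upwards with t
    rw [Real.norm_eq_abs, abs_le]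
    constructor
    · calc -(C/2) ≤ -(𝒜 t)^2/2 := by linarith [h𝒜 t]
        _ ≤ 𝓑 t := (h𝓑 t).1
    · calc 𝓑 t ≤ -(𝒜 t)^2/4 := (h𝓑 t).2
        _ ≤ C/2 := by nlinarith [sq_nonneg (𝒜 t), hC.le]
  have hCint : IntervalIntegrable (fun _ : ℝ => C) volume 0 T := intervalIntegrable_const
  have hI_nonneg : 0 ≤ ∫ u in (0:ℝ)..T, (𝒜 u) ^ 2 :=
    intervalIntegral.integral_nonneg hT.le (fun u _ => sq_nonneg _)
  have hI_le : (∫ u in (0:ℝ)..T, (𝒜 u) ^ 2) ≤ C * T := by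
    calc (∫ u in (0:ℝ)..T, (𝒜 u) ^ 2) ≤ ∫ _ in (0:ℝ)..T, C :=
          intervalIntegral.integral_mono_on hT.le hA2int hCint (fun u _ => h𝒜 u)
      _ = C * T := by simp [mul_comm]
  have hB_le : -(∫ u in (0:ℝ)..T, 𝓑 u) ≤ (∫ u in (0:ℝ)..T, (𝒜 u) ^ 2) / 2 := by
    have h1 : -(∫ u in (0:ℝ)..T, 𝓑 u) = ∫ u in (0:ℝ)..T, -(𝓑 u) := by
      rw [intervalIntegral.integral_neg]
    rw [h1]
    have h2 : (∫ u in (0:ℝ)..T, -(𝓑 u)) ≤ ∫ u in (0:ℝ)..T, (𝒜 u) ^ 2 / 2 :=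
      intervalIntegral.integral_mono_on hT.le hBint.neg (hA2int.div_const 2)
        (fun u _ => by linarith [(h𝓑 u).1])
    rw [intervalIntegral.integral_div] at h2
    exact h2
  -- denominator bound
  have hD : σ₀ ≤ Real.sqrt (σ₀ ^ 2 + ∫ u in (0:ℝ)..T, (𝒜 u) ^ 2) := by
    have h := Real.sqrt_le_sqrt (show σ₀ ^ 2 ≤ σ₀ ^ 2 + ∫ u in (0:ℝ)..T, (𝒜 u) ^ 2 by linarith)
    rwa [Real.sqrt_sq hσ₀.le] at h
  have hDpos : 0 < Real.sqrt (σ₀ ^ 2 + ∫ u in (0:ℝ)..T, (𝒜 u) ^ 2) := lt_of_lt_of_le hσ₀ hD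
  -- numerator bound
  have hN : ρ T - μ₀ - (∫ u in (0:ℝ)..T, 𝓑 u) ≤ C * T / 2 := by
    have : ρ T - μ₀ - (∫ u in (0:ℝ)..T, 𝓑 u) ≤ (∫ u in (0:ℝ)..T, (𝒜 u) ^ 2) / 2 := by
      linarith
    linarith
  have hx_le : x ≤ C * T / (2 * σ₀) := by
    rw [hx]
    rcases le_or_gt (ρ T - μ₀ - (∫ u in (0:ℝ)..T, 𝓑 u)) 0 with h | h
    · have : (ρ T - μ₀ - ∫ u in (0:ℝ)..T, 𝓑 u)
          / Real.sqrt (σ₀ ^ 2 + ∫ u in (0:ℝ)..T, (𝒜 u) ^ 2) ≤ 0 :=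
        div_nonpos_of_nonpos_of_nonneg h hDpos.le
      have hb : (0:ℝ) ≤ C * T / (2 * σ₀) := by positivity
      linarith
    · calc (ρ T - μ₀ - ∫ u in (0:ℝ)..T, 𝓑 u)
          / Real.sqrt (σ₀ ^ 2 + ∫ u in (0:ℝ)..T, (𝒜 u) ^ 2)
          ≤ (C * T / 2) / σ₀ := by
            apply div_le_div₀ (by positivity) hN hσ₀ hD
      _ = C * T / (2 * σ₀) := by ring
  rw [ge_iff_le]
  calc 2 * σ₀ / C * x ≤ 2 * σ₀ / C * (C * T / (2 * σ₀)) := by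
        apply mul_le_mul_of_nonneg_left hx_le (by positivity)
    _ = T := by field_simp
end

section
/- Let ψ : [t₀, T) → ℝ be continuous with ψ(t₀) = y, and suppose that on every subinterval (u₀, u₁) ⊆ (t₀, T) on which ψ < y throughout, ψ is strictly increasing, and on every subinterval on which ψ ≥ y throughout (with ψ = y at the left endpoint), ψ is strictly decreasing. Then no such function ψ exists on any interval [t₀, t₀+ε) with ε > 0; i.e. the assumptions are contradictory, since ψ can neither stay at y, go above y, nor go below y. -/
/-- abstract oscillation argument of Proposition 5.2: a continuous
function `ψ` on `[t₀, t₀+ε)` with `ψ(t₀) = y` that is strictly increasing on every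
subinterval with left endpoint value `y` on which it stays `< y` afterwards, and strictly
decreasing on every subinterval with left endpoint value `y` on which it stays `≥ y`,
cannot exist: the assumptions are contradictory. -/
theorem oscillation_no_solution
    (t₀ y ε : ℝ) (hε : 0 < ε)
    (ψ : ℝ → ℝ)
    (hcont : ContinuousOn ψ (Set.Ico t₀ (t₀ + ε)))
    (hψ0 : ψ t₀ = y)
    (hup : ∀ u₀ u₁, t₀ ≤ u₀ → u₀ < u₁ → u₁ < t₀ + ε → ψ u₀ = y →
      (∀ s ∈ Set.Ioc u₀ u₁, ψ s < y) → StrictMonoOn ψ (Set.Icc u₀ u₁))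
    (hdown : ∀ u₀ u₁, t₀ ≤ u₀ → u₀ < u₁ → u₁ < t₀ + ε → ψ u₀ = y →
      (∀ s ∈ Set.Icc u₀ u₁, y ≤ ψ s) → StrictAntiOn ψ (Set.Icc u₀ u₁)) :
    False := by

  set t₁ := t₀ + ε / 2 with ht₁def
  have ht01 : t₀ < t₁ := by simp [ht₁def]; linarith
  have ht₁lt : t₁ < t₀ + ε := by simp [ht₁def]; linarith
  -- either ψ ≡ y on [t₀, t₁] (contradiction with hdown) or some t with ψ t ≠ y
  by_cases hall : ∀ t ∈ Set.Icc t₀ t₁, ψ t = y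
  · have h := hdown t₀ t₁ le_rfl ht01 ht₁lt hψ0
      (fun s hs => le_of_eq (hall s hs).symm)
    have := h (Set.left_mem_Icc.2 ht01.le) (Set.right_mem_Icc.2 ht01.le) ht01
    rw [hall t₀ (Set.left_mem_Icc.2 ht01.le), hall t₁ (Set.right_mem_Icc.2 ht01.le)] at this
    exact lt_irrefl _ this
  push_neg at hall
  obtain ⟨t, ht, htne⟩ := hall
  have ht0t : t₀ < t := by
    rcases eq_or_lt_of_le ht.1 with h | h
    · exact absurd (h ▸ hψ0) htne
    · exact h
  have htlt : t < t₀ + ε := lt_of_le_of_lt ht.2 ht₁lt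
  have hsub : Set.Icc t₀ t ⊆ Set.Ico t₀ (t₀ + ε) :=
    Set.Icc_subset_Ico_right htlt
  have hcont' : ContinuousOn ψ (Set.Icc t₀ t) := hcont.mono hsub
  rcases lt_or_gt_of_ne htne with hlt | hgt
  · -- ψ t < y : take last time ψ ≥ y
    set S := {r | r ∈ Set.Icc t₀ t ∧ y ≤ ψ r} with hS
    have hSne : S.Nonempty := ⟨t₀, Set.left_mem_Icc.2 ht0t.le, hψ0.ge⟩
    have hScl : IsClosed S := by
      have : S = Set.Icc t₀ t ∩ ψ ⁻¹' Set.Ici y := rfl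
      rw [this]
      exact hcont'.preimage_isClosed_of_isClosed isClosed_Icc isClosed_Ici
    have hScomp : IsCompact S := (isCompact_Icc.of_isClosed_subset hScl (fun r hr => hr.1))
    set s := sSup S with hsdef
    have hsmem : s ∈ S := hScomp.sSup_mem hSne
    have hst : s ≤ t := hsmem.1.2
    have hslt : s < t := lt_of_le_of_ne hst (fun h => by rw [h] at hsmem; linarith [hsmem.2])
    have hafter : ∀ r ∈ Set.Ioc s t, ψ r < y := by
      intro r hr
      by_contra hyr
      push_neg at hyr
      have : r ∈ S := ⟨⟨le_trans hsmem.1.1 hr.1.le, hr.2⟩, hyr⟩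
      exact absurd (le_csSup hScomp.bddAbove this) (not_le.2 hr.1)
    have hψs : ψ s = y := by
      refine le_antisymm ?_ hsmem.2
      have hct : ContinuousWithinAt ψ (Set.Ioc s t) s := by
        refine (hcont.continuousWithinAt (hsub ⟨hsmem.1.1, hst⟩)).mono ?_
        intro r hr
        exact hsub ⟨le_trans hsmem.1.1 hr.1.le, hr.2⟩
      have hne : (nhdsWithin s (Set.Ioc s t)).NeBot := left_nhdsWithin_Ioc_neBot hslt
      exact le_of_tendsto hct (Filter.eventually_of_mem self_mem_nhdsWithin
        (fun r hr => (hafter r hr).le))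
    have hmono := hup s t hsmem.1.1 hslt htlt hψs hafter
    have := hmono (Set.left_mem_Icc.2 hslt.le) (Set.right_mem_Icc.2 hslt.le) hslt
    rw [hψs] at this
    linarith
  · -- ψ t > y : take last time ψ ≤ y
    set S := {r | r ∈ Set.Icc t₀ t ∧ ψ r ≤ y} with hS
    have hSne : S.Nonempty := ⟨t₀, Set.left_mem_Icc.2 ht0t.le, hψ0.le⟩
    have hScl : IsClosed S := by
      have : S = Set.Icc t₀ t ∩ ψ ⁻¹' Set.Iic y := rfl
      rw [this]
      exact hcont'.preimage_isClosed_of_isClosed isClosed_Icc isClosed_Iic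
    have hScomp : IsCompact S := (isCompact_Icc.of_isClosed_subset hScl (fun r hr => hr.1))
    set s := sSup S with hsdef
    have hsmem : s ∈ S := hScomp.sSup_mem hSne
    have hst : s ≤ t := hsmem.1.2
    have hslt : s < t := lt_of_le_of_ne hst (fun h => by rw [h] at hsmem; linarith [hsmem.2])
    have hafter : ∀ r ∈ Set.Ioc s t, y < ψ r := by
      intro r hr
      by_contra hyr
      push_neg at hyr
      have : r ∈ S := ⟨⟨le_trans hsmem.1.1 hr.1.le, hr.2⟩, hyr⟩
      exact absurd (le_csSup hScomp.bddAbove this) (not_le.2 hr.1)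
    have hψs : ψ s = y := by
      refine le_antisymm hsmem.2 ?_
      have hct : ContinuousWithinAt ψ (Set.Ioc s t) s := by
        refine (hcont.continuousWithinAt (hsub ⟨hsmem.1.1, hst⟩)).mono ?_
        intro r hr
        exact hsub ⟨le_trans hsmem.1.1 hr.1.le, hr.2⟩
      have hne : (nhdsWithin s (Set.Ioc s t)).NeBot := left_nhdsWithin_Ioc_neBot hslt
      exact ge_of_tendsto hct (Filter.eventually_of_mem self_mem_nhdsWithin
        (fun r hr => (hafter r hr).le))
    have hanti := hdown s t hsmem.1.1 hslt htlt hψs ?_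
    · have := hanti (Set.left_mem_Icc.2 hslt.le) (Set.right_mem_Icc.2 hslt.le) hslt
      rw [hψs] at this
      linarith
    · intro r hr
      rcases eq_or_lt_of_le hr.1 with h | h
      · exact le_of_eq (h ▸ hψs).symm
      · exact (hafter r ⟨h, hr.2⟩).le
end

section
/- Let Φ be the standard normal CDF and ψ(t) := Φ((−c − ∫_{t₀}^t β(s)ds)/√(v + ∫_{t₀}^t α(s)²ds)) where c ≥ 0, v > 0, α is continuous bounded with a := inf_{t ≥ t₀} α(t)² > 0 and A := sup_{t ≥ t₀} α(t)² < ∞, and β(t) ≤ −α(t)²/4. Then ψ(t) ≥ Φ(−c/√v + (a/4)(t−t₀)/√(v + A(t−t₀))) for all t ≥ t₀, and the right-hand side tends to 1 as t → ∞. -/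
open ProbabilityTheory

private lemma sqrt_tendsto_atTop' : Filter.Tendsto Real.sqrt Filter.atTop Filter.atTop := by
  apply Filter.tendsto_atTop_atTop.2
  intro b
  refine ⟨max 0 b ^ 2, fun x hx => (le_max_right 0 b).trans ?_⟩
  rw [← Real.sqrt_sq (le_max_left 0 b)]
  exact Real.sqrt_le_sqrt hx

/-- quantitative lower bound used for `ψ(t) ↑ 1` in Lemma 4.3(i):
`ψ(t) ≥ Φ(−c/√v + (a/4)(t−t₀)/√(v + A(t−t₀)))` and the lower bound tends to `1`. -/
theorem psi_lower_bound_tendsto_one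
    (t₀ c v a A : ℝ) (hc : 0 ≤ c) (hv : 0 < v) (ha : 0 < a)
    (α β : ℝ → ℝ) (hαcont : Continuous α) (hβcont : Continuous β)
    (hainf : ∀ t, t₀ ≤ t → a ≤ (α t) ^ 2)
    (hAsup : ∀ t, t₀ ≤ t → (α t) ^ 2 ≤ A)
    (hβ : ∀ t, t₀ ≤ t → β t ≤ -(α t) ^ 2 / 4)
    (ψ : ℝ → ℝ)
    (hψ : ∀ t, ψ t = cdf (gaussianReal 0 1)
      ((-c - ∫ s in t₀..t, β s) / Real.sqrt (v + ∫ s in t₀..t, (α s) ^ 2))) :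
    (∀ t, t₀ ≤ t → cdf (gaussianReal 0 1)
        (-c / Real.sqrt v + (a / 4) * (t - t₀) / Real.sqrt (v + A * (t - t₀))) ≤ ψ t) ∧
    Filter.Tendsto (fun t => cdf (gaussianReal 0 1)
        (-c / Real.sqrt v + (a / 4) * (t - t₀) / Real.sqrt (v + A * (t - t₀))))
      Filter.atTop (nhds 1) := by
  have hA : 0 < A := ha.trans_le ((hainf t₀ le_rfl).trans (hAsup t₀ le_rfl))
  constructor
  · intro t ht
    rw [hψ]
    set Iα := ∫ s in t₀..t, (α s) ^ 2 with hIα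
    set Iβ := ∫ s in t₀..t, β s with hIβ
    have hint_α : IntervalIntegrable (fun s => (α s) ^ 2) MeasureTheory.volume t₀ t :=
      (hαcont.pow 2).intervalIntegrable _ _
    have hint_β : IntervalIntegrable β MeasureTheory.volume t₀ t :=
      hβcont.intervalIntegrable _ _
    have h1 : a * (t - t₀) ≤ Iα := by
      have := intervalIntegral.integral_mono_on ht intervalIntegrable_const hint_α
        (fun s hs => hainf s hs.1)
      simpa [intervalIntegral.integral_const, mul_comm] using this
    have h2 : Iα ≤ A * (t - t₀) := by
      have := intervalIntegral.integral_mono_on ht hint_α intervalIntegrable_const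
        (fun s hs => hAsup s hs.1)
      simpa [intervalIntegral.integral_const, mul_comm] using this
    have h3 : Iβ ≤ -Iα / 4 := by
      have hint : IntervalIntegrable (fun s => -(α s) ^ 2 / 4) MeasureTheory.volume t₀ t :=
        ((hαcont.pow 2).neg.div_const 4).intervalIntegrable _ _
      have := intervalIntegral.integral_mono_on ht hint_β hint (fun s hs => hβ s hs.1)
      simpa [intervalIntegral.integral_div, intervalIntegral.integral_neg, hIα, neg_div]
        using this
    have hts : (0:ℝ) ≤ t - t₀ := by linarith
    have hIα0 : 0 ≤ Iα := le_trans (by positivity) h1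
    have hv1 : (0:ℝ) < v + Iα := by linarith
    have hv2 : (0:ℝ) < v + A * (t - t₀) := by positivity
    apply monotone_cdf
    have key1 : -c / Real.sqrt v ≤ -c / Real.sqrt (v + Iα) := by
      rw [neg_div, neg_div, neg_le_neg_iff]
      gcongr
      linarith
    have key2 : a / 4 * (t - t₀) / Real.sqrt (v + A * (t - t₀)) ≤
        Iα / 4 / Real.sqrt (v + Iα) := by
      gcongr
      linarith
    have key3 : -c / Real.sqrt (v + Iα) + Iα / 4 / Real.sqrt (v + Iα) ≤
        (-c - Iβ) / Real.sqrt (v + Iα) := by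
      rw [← add_div]
      gcongr
      · linarith
    calc -c / Real.sqrt v + a / 4 * (t - t₀) / Real.sqrt (v + A * (t - t₀))
        ≤ -c / Real.sqrt (v + Iα) + Iα / 4 / Real.sqrt (v + Iα) := add_le_add key1 key2
      _ ≤ (-c - Iβ) / Real.sqrt (v + Iα) := key3
  · have harg : Filter.Tendsto
        (fun t => -c / Real.sqrt v + a / 4 * (t - t₀) / Real.sqrt (v + A * (t - t₀)))
        Filter.atTop Filter.atTop := by
      apply Filter.tendsto_atTop_add_const_left
      have hlow : Filter.Tendsto (fun t => a / 4 * Real.sqrt (t - t₀) / Real.sqrt (v + A))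
          Filter.atTop Filter.atTop := by
        apply Filter.Tendsto.atTop_div_const (Real.sqrt_pos.2 (by positivity))
        apply Filter.Tendsto.const_mul_atTop (by positivity : (0:ℝ) < a / 4)
        exact sqrt_tendsto_atTop'.comp (Filter.tendsto_atTop_add_const_right _ _
          Filter.tendsto_id)
      apply Filter.tendsto_atTop_mono' _ _ hlow
      filter_upwards [Filter.eventually_ge_atTop (t₀ + 1)] with t ht
      have hs1 : (1:ℝ) ≤ t - t₀ := by linarith
      have hs0 : (0:ℝ) < t - t₀ := by linarith
      have hsq : Real.sqrt (v + A * (t - t₀)) ≤ Real.sqrt (v + A) * Real.sqrt (t - t₀) := by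
        rw [← Real.sqrt_mul (by positivity)]
        apply Real.sqrt_le_sqrt
        nlinarith
      have hden : (0:ℝ) < Real.sqrt (v + A * (t - t₀)) := Real.sqrt_pos.2 (by positivity)
      have hnum : (0:ℝ) ≤ a / 4 * (t - t₀) := by positivity
      rw [div_le_div_iff₀ (Real.sqrt_pos.2 (by positivity)) hden]
      calc a / 4 * Real.sqrt (t - t₀) * Real.sqrt (v + A * (t - t₀))
          ≤ a / 4 * Real.sqrt (t - t₀) * (Real.sqrt (v + A) * Real.sqrt (t - t₀)) := by
            gcongr
        _ = a / 4 * (Real.sqrt (t - t₀) * Real.sqrt (t - t₀)) * Real.sqrt (v + A) := by ring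
        _ = a / 4 * (t - t₀) * Real.sqrt (v + A) := by rw [Real.mul_self_sqrt hs0.le]
    exact (tendsto_cdf_atTop (gaussianReal 0 1)).comp harg
end
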